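/- Let F : Sym⁺_n → ℝ be twice continuously differentiable, positive, positively homogeneous of degree 1, such that ∇F(A) is positive definite for every A ∈ Sym⁺_n, and inverse concave. Then for every A ∈ Sym⁺_n and every symmetric matrix η ∈ Sym_n one has D²F(A)[η,η] + 2·tr(∇F(A)·η·A⁻¹·η) − (2/F(A))·(tr(∇F(A)·η))² ≥ 0. -/

import Mathlib

noncomputable section

open Matrix

attribute [local instance] Matrix.normedAddCommGroup Matrix.normedSpace

open Filter Set

namespace InvConcAux

variable {n : ℕ}

abbrev Mat (n : ℕ) := Matrix (Fin n) (Fin n) ℝ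

lemma isHermitian_of_isSymm {M : Mat n} (h : M.IsSymm) : M.IsHermitian := by
  have : Mᵀ = M := h
  ext i j
  rw [Matrix.conjTranspose_apply, star_trivial, ← Matrix.transpose_apply M i j, this]

lemma quadform_smul (M : Mat n) (r : ℝ) (u : Fin n → ℝ) :
    (r • u) ⬝ᵥ (M *ᵥ (r • u)) = r ^ 2 * (u ⬝ᵥ (M *ᵥ u)) := by
  rw [Matrix.mulVec_smul, smul_dotProduct, dotProduct_smul,
    smul_eq_mul, smul_eq_mul]
  ring

lemma posdef_perturb {A η : Mat n} (hA : A.PosDef) (hη : η.IsSymm) :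
    ∃ ε > 0, ∀ t : ℝ, |t| < ε → (A + t • η).PosDef := by
  classical
  have herm : ∀ t : ℝ, (A + t • η).IsHermitian := by
    intro t
    exact hA.1.add (isHermitian_of_isSymm (by simp [Matrix.IsSymm, Matrix.transpose_smul, hη.eq]))
  set K : Set (Fin n → ℝ) := Metric.sphere (0 : Fin n → ℝ) 1 with hK
  by_cases hne : K.Nonempty
  · have hKc : IsCompact K := isCompact_sphere 0 1
    have hfc : Continuous fun x : Fin n → ℝ => x ⬝ᵥ (A *ᵥ x) :=
      (continuous_id.dotProduct ((continuous_const (y := A)).matrix_mulVec continuous_id))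
    have hgc : Continuous fun x : Fin n → ℝ => |x ⬝ᵥ (η *ᵥ x)| :=
      ((continuous_id.dotProduct
        ((continuous_const (y := η)).matrix_mulVec continuous_id))).abs
    obtain ⟨x₀, hx₀K, hmin⟩ := hKc.exists_isMinOn hne hfc.continuousOn
    obtain ⟨x₁, hx₁K, hmax⟩ := hKc.exists_isMaxOn hne hgc.continuousOn
    set m := x₀ ⬝ᵥ (A *ᵥ x₀) with hm
    set C := |x₁ ⬝ᵥ (η *ᵥ x₁)| with hC
    have hx₀ne : x₀ ≠ 0 := by
      intro h0
      have : ‖x₀‖ = 1 := by simpa [hK] using hx₀K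
      rw [h0] at this; simp at this
    have hmpos : 0 < m := by
      have := hA.dotProduct_mulVec_pos hx₀ne
      simpa [hm, star_trivial] using this
    have hCnn : 0 ≤ C := abs_nonneg _
    refine ⟨m / (C + 1), by positivity, fun t ht => ?_⟩
    refine Matrix.PosDef.of_dotProduct_mulVec_pos (herm t) (fun x hx => ?_)
    have hxn : ‖x‖ ≠ 0 := by simpa using hx
    set u : Fin n → ℝ := ‖x‖⁻¹ • x with hu
    have huK : u ∈ K := by
      simp [hu, hK, norm_smul, inv_mul_cancel₀ hxn]
    have hxu : x = ‖x‖ • u := by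
      rw [hu, smul_smul, mul_inv_cancel₀ hxn, one_smul]
    have hq : u ⬝ᵥ ((A + t • η) *ᵥ u) = u ⬝ᵥ (A *ᵥ u) + t * (u ⬝ᵥ (η *ᵥ u)) := by
      rw [Matrix.add_mulVec, dotProduct_add, Matrix.smul_mulVec,
        dotProduct_smul, smul_eq_mul]
    have h1 : m ≤ u ⬝ᵥ (A *ᵥ u) := hmin huK
    have h2 : |u ⬝ᵥ (η *ᵥ u)| ≤ C := hmax huK
    have h3 : |t * (u ⬝ᵥ (η *ᵥ u))| ≤ |t| * C := by
      rw [abs_mul]; exact mul_le_mul_of_nonneg_left h2 (abs_nonneg t)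
    have h4 : |t| * C < m := by
      calc |t| * C ≤ |t| * (C + 1) := by nlinarith [abs_nonneg t]
        _ < (m / (C + 1)) * (C + 1) := by
            apply mul_lt_mul_of_pos_right ht; positivity
        _ = m := by field_simp
    have hupos : 0 < u ⬝ᵥ ((A + t • η) *ᵥ u) := by
      rw [hq]
      have := neg_abs_le (t * (u ⬝ᵥ (η *ᵥ u)))
      linarith
    have : 0 < x ⬝ᵥ ((A + t • η) *ᵥ x) := by
      rw [hxu, quadform_smul]
      have : 0 < ‖x‖ ^ 2 := by positivity
      positivity
    simpa [star_trivial] using this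
  · refine ⟨1, one_pos, fun t ht => Matrix.PosDef.of_dotProduct_mulVec_pos (herm t) (fun x hx => ?_)⟩
    exfalso
    apply hne
    have hxn : ‖x‖ ≠ 0 := by simpa using hx
    exact ⟨‖x‖⁻¹ • x, by simp [hK, norm_smul, inv_mul_cancel₀ hxn]⟩

lemma hasDerivAt_inv_line (C ζ : Mat n) {U : Set ℝ} (hU : IsOpen U)
    (hinv : ∀ s ∈ U, IsUnit (C + s • ζ)) {t : ℝ} (ht : t ∈ U) :
    HasDerivAt (fun s => (C + s • ζ)⁻¹)
      (-((C + t • ζ)⁻¹ * ζ * (C + t • ζ)⁻¹)) t := by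
  set c : ℝ → Mat n := fun s => C + s • ζ with hc
  set B : ℝ → Mat n := fun s => (c s)⁻¹ with hB
  have hcc : Continuous c := by
    apply continuous_const.add (continuous_id.smul continuous_const)
  have hdet : ((c t).det) ≠ 0 := by
    intro h0
    have := (Matrix.isUnit_iff_isUnit_det _).mp (hinv t ht)
    rw [h0] at this; simp at this
  have hRinv : ContinuousAt Ring.inverse ((c t).det) := by
    rw [Ring.inverse_eq_inv']
    exact continuousAt_inv₀ hdet
  have hBc : ContinuousAt B t :=
    (continuousAt_matrix_inv (c t) hRinv).comp hcc.continuousAt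
  have hev : ∀ᶠ s in nhdsWithin t {t}ᶜ, slope B t s = -(B s * ζ * B t) := by
    have hUmem : U ∈ nhdsWithin t {t}ᶜ := nhdsWithin_le_nhds (hU.mem_nhds ht)
    filter_upwards [hUmem, self_mem_nhdsWithin] with s hsU hst
    have hst' : s ≠ t := hst
    have hsub : B s - B t = (t - s) • (B s * ζ * B t) := by
      have := Matrix.inv_sub_inv (A := c s) (B := c t)
        (by constructor <;> intro _ <;> [exact hinv t ht; exact hinv s hsU])
      rw [hB]
      rw [this]
      have : c t - c s = (t - s) • ζ := by
        simp only [hc, sub_smul]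
        abel
      rw [this]
      simp [Matrix.mul_smul, Matrix.smul_mul]
    rw [slope_def_module, hsub, smul_smul]
    rw [inv_mul_eq_div]
    have : (t - s) / (s - t) = -1 := by
      have h2 : s - t ≠ 0 := sub_ne_zero.mpr hst'
      field_simp
      ring
    rw [this, neg_one_smul]
  have hcont : ContinuousAt (fun s => -(B s * ζ * B t)) t := by
    have h1 : Continuous fun M : Mat n => -(M * ζ * B t) :=
      ((continuous_id.matrix_mul continuous_const).matrix_mul continuous_const).neg
    exact h1.continuousAt.comp hBc
  refine hasDerivAt_iff_tendsto_slope.mpr ?_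
  apply Tendsto.congr' (hev.mono fun s h => h.symm)
  exact (hcont.tendsto).mono_left nhdsWithin_le_nhds

def mulL (ζ : Mat n) : Mat n →L[ℝ] Mat n →L[ℝ] Mat n :=
  LinearMap.toContinuousLinearMap
  { toFun := fun X => LinearMap.toContinuousLinearMap
      { toFun := fun Y => X * ζ * Y
        map_add' := fun Y Z => by simp [mul_add]
        map_smul' := fun r Y => by simp [Matrix.mul_smul] }
    map_add' := fun X X' => by
      ext Y
      simp [add_mul]
    map_smul' := fun r X => by
      ext Y
      simp [Matrix.smul_mul] }

@[simp] lemma mulL_apply (ζ X Y : Mat n) : mulL ζ X Y = X * ζ * Y := rfl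

lemma HasDerivAt.mulmul {B : ℝ → Mat n} {B' : Mat n} (ζ : Mat n) {t : ℝ}
    (h : HasDerivAt B B' t) :
    HasDerivAt (fun s => B s * ζ * B s) (B' * ζ * B t + B t * ζ * B') t := by
  have hb := (mulL (n := n) ζ).isBoundedBilinearMap.hasFDerivAt (B t, B t)
  have hp : HasDerivAt (fun s => (B s, B s)) (B', B') t := h.prodMk h
  have h2 := hb.comp_hasDerivAt t hp
  have h3 : HasDerivAt (fun s => B s * ζ * B s)
      ((mulL ζ).isBoundedBilinearMap.deriv (B t, B t) (B', B')) t := h2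
  rw [IsBoundedBilinearMap.deriv_apply] at h3
  rw [add_comm] at h3
  exact h3

end InvConcAux

open InvConcAux

set_option maxHeartbeats 2000000

/-- for a positive, 1-homogeneous, monotone (positive definite gradient),
inverse concave, twice continuously differentiable curvature function `F` on the cone
of positive definite symmetric matrices, one has
`D²F(A)[η,η] + 2 tr(∇F(A) η A⁻¹ η) - (2 / F(A)) (tr(∇F(A) η))² ≥ 0`
for all symmetric `η`. -/
theorem inverse_concave_inequality (n : ℕ) (F : Matrix (Fin n) (Fin n) ℝ → ℝ)
    (DF : Matrix (Fin n) (Fin n) ℝ → (Matrix (Fin n) (Fin n) ℝ →L[ℝ] ℝ))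
    (D2F : Matrix (Fin n) (Fin n) ℝ →
      (Matrix (Fin n) (Fin n) ℝ →L[ℝ] Matrix (Fin n) (Fin n) ℝ →L[ℝ] ℝ))
    (gradF : Matrix (Fin n) (Fin n) ℝ → Matrix (Fin n) (Fin n) ℝ)
    -- `F` is twice continuously differentiable on `Sym⁺ₙ`:
    (hDF : ∀ A : Matrix (Fin n) (Fin n) ℝ, A.PosDef →
      HasFDerivWithinAt F (DF A) {B : Matrix (Fin n) (Fin n) ℝ | B.PosDef} A)
    (hD2F : ∀ A : Matrix (Fin n) (Fin n) ℝ, A.PosDef →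
      HasFDerivWithinAt DF (D2F A) {B : Matrix (Fin n) (Fin n) ℝ | B.PosDef} A)
    (hD2Fcont : ContinuousOn D2F {B : Matrix (Fin n) (Fin n) ℝ | B.PosDef})
    -- `∇F(A)` is the gradient of `F` at `A`, a symmetric matrix with
    -- `DF(A)[η] = tr(∇F(A)·η)` for all symmetric `η`:
    (hgradsymm : ∀ A : Matrix (Fin n) (Fin n) ℝ, A.PosDef → (gradF A).IsSymm)
    (hgrad : ∀ A : Matrix (Fin n) (Fin n) ℝ, A.PosDef →
      ∀ η : Matrix (Fin n) (Fin n) ℝ, η.IsSymm → DF A η = (gradF A * η).trace)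
    -- `F` is positive:
    (hpos : ∀ A : Matrix (Fin n) (Fin n) ℝ, A.PosDef → 0 < F A)
    -- `F` is positively homogeneous of degree 1:
    (hhom : ∀ A : Matrix (Fin n) (Fin n) ℝ, A.PosDef → ∀ c : ℝ, 0 < c → F (c • A) = c * F A)
    -- `∇F(A)` is positive definite:
    (hmono : ∀ A : Matrix (Fin n) (Fin n) ℝ, A.PosDef → (gradF A).PosDef)
    -- `F` is inverse concave:
    (hinvconc : ConcaveOn ℝ {B : Matrix (Fin n) (Fin n) ℝ | B.PosDef}
      (fun B => (F B⁻¹)⁻¹)) :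
    ∀ A : Matrix (Fin n) (Fin n) ℝ, A.PosDef → ∀ η : Matrix (Fin n) (Fin n) ℝ, η.IsSymm →
      0 ≤ D2F A η η + 2 * (gradF A * η * A⁻¹ * η).trace
        - (2 / F A) * ((gradF A * η).trace) ^ 2 := by
  classical
  intro A hA η hη
  have hdetA : IsUnit A.det := (Matrix.isUnit_iff_isUnit_det A).mp hA.isUnit
  have hAinv : (A⁻¹).PosDef := hA.inv
  have hAT : Aᵀ = A := by
    have h := hA.1
    ext i j
    have := congrFun (congrFun h i) j
    simpa [Matrix.conjTranspose_apply, star_trivial] using this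
  have hAinvT : (A⁻¹)ᵀ = A⁻¹ := by rw [Matrix.transpose_nonsing_inv, hAT]
  set ζ : Matrix (Fin n) (Fin n) ℝ := A⁻¹ * η * A⁻¹ with hζ
  have hηT : ηᵀ = η := hη
  have hζsymm : ζ.IsSymm := by
    show ζᵀ = ζ
    rw [hζ, Matrix.transpose_mul, Matrix.transpose_mul, hAinvT, hηT, Matrix.mul_assoc]
  obtain ⟨ε, hε, hpd⟩ := posdef_perturb hAinv hζsymm
  set I : Set ℝ := Ioo (-ε) ε with hI
  have hIopen : IsOpen I := isOpen_Ioo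
  have h0I : (0 : ℝ) ∈ I := ⟨by linarith, hε⟩
  have hmemI : ∀ t ∈ I, (A⁻¹ + t • ζ).PosDef := fun t ht =>
    hpd t (abs_lt.mpr ⟨ht.1, ht.2⟩)
  set c : ℝ → Matrix (Fin n) (Fin n) ℝ := fun t => A⁻¹ + t • ζ with hc
  set B : ℝ → Matrix (Fin n) (Fin n) ℝ := fun t => (c t)⁻¹ with hB
  have hBpd : ∀ t ∈ I, (B t).PosDef := fun t ht => (hmemI t ht).inv
  have hB0 : B 0 = A := by
    have : c 0 = A⁻¹ := by simp [hc]
    rw [hB]; simp only [this]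
    exact Matrix.nonsing_inv_nonsing_inv A hdetA
  have hBderiv : ∀ t ∈ I, HasDerivAt B (-(B t * ζ * B t)) t := fun t ht =>
    hasDerivAt_inv_line A⁻¹ ζ hIopen (fun s hs => (hmemI s hs).isUnit) ht
  have hmapsto : MapsTo B I {M : Matrix (Fin n) (Fin n) ℝ | M.PosDef} := fun t ht => hBpd t ht
  -- first derivative of φ = F ∘ B
  have hφ : ∀ t ∈ I, HasDerivAt (fun s => F (B s)) (DF (B t) (-(B t * ζ * B t))) t := by
    intro t ht
    have h1 : HasDerivWithinAt (F ∘ B) (DF (B t) (-(B t * ζ * B t))) I t :=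
      (hDF (B t) (hBpd t ht)).comp_hasDerivWithinAt t
        ((hBderiv t ht).hasDerivWithinAt) hmapsto
    exact (h1.hasDerivAt (hIopen.mem_nhds ht))
  have hψ : ∀ t ∈ I, HasDerivAt (fun s => DF (B s)) (D2F (B t) (-(B t * ζ * B t))) t := by
    intro t ht
    letI : NormedAddCommGroup (Matrix (Fin n) (Fin n) ℝ →L[ℝ] ℝ) :=
      ContinuousLinearMap.toNormedAddCommGroup
    letI : NormedSpace ℝ (Matrix (Fin n) (Fin n) ℝ →L[ℝ] ℝ) :=
      ContinuousLinearMap.toNormedSpace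
    have h1 : HasDerivWithinAt (DF ∘ B) (D2F (B t) (-(B t * ζ * B t))) I t :=
      (hD2F (B t) (hBpd t ht)).comp_hasDerivWithinAt t
        ((hBderiv t ht).hasDerivWithinAt) hmapsto
    exact (h1.hasDerivAt (hIopen.mem_nhds ht))
  have hv : ∀ t ∈ I, HasDerivAt (fun s => B s * ζ * B s)
      (-(B t * ζ * B t) * ζ * B t + B t * ζ * -(B t * ζ * B t)) t := fun t ht =>
    InvConcAux.HasDerivAt.mulmul ζ (hBderiv t ht)
  set d : ℝ → ℝ := fun s => DF (B s) (B s * ζ * B s) with hd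
  have hdderiv : ∀ t ∈ I, HasDerivAt d
      (D2F (B t) (-(B t * ζ * B t)) (B t * ζ * B t)
        + DF (B t) (-(B t * ζ * B t) * ζ * B t + B t * ζ * -(B t * ζ * B t))) t :=
    fun t ht => (hψ t ht).clm_apply (hv t ht)
  have hφpos : ∀ t ∈ I, 0 < F (B t) := fun t ht => hpos _ (hBpd t ht)
  set g : ℝ → ℝ := fun s => (F (B s))⁻¹ with hg
  set g1 : ℝ → ℝ := fun s => d s / (F (B s)) ^ 2 with hg1
  have hgderiv : ∀ t ∈ I, HasDerivAt g (g1 t) t := by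
    intro t ht
    have h1 := (hφ t ht).inv (ne_of_gt (hφpos t ht))
    have h2 : -DF (B t) (-(B t * ζ * B t)) / F (B t) ^ 2 = g1 t := by
      rw [map_neg, neg_neg, hg1]
    rw [h2] at h1
    exact h1
  -- concavity of g on I
  have hgconc : ConcaveOn ℝ I g := by
    refine ⟨convex_Ioo _ _, ?_⟩
    intro x hx y hy a b ha hb hab
    have hcx : c x ∈ {M : Matrix (Fin n) (Fin n) ℝ | M.PosDef} := hmemI x hx
    have hcy : c y ∈ {M : Matrix (Fin n) (Fin n) ℝ | M.PosDef} := hmemI y hy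
    have h1 := hinvconc.2 hcx hcy ha hb hab
    have hlin : a • c x + b • c y = c (a * x + b * y) := by
      simp only [hc, smul_add, smul_smul]
      have hA1 : a • A⁻¹ + b • A⁻¹ = A⁻¹ := by rw [← add_smul, hab, one_smul]
      rw [add_smul]
      calc a • A⁻¹ + (a * x) • ζ + (b • A⁻¹ + (b * y) • ζ)
          = (a • A⁻¹ + b • A⁻¹) + ((a * x) • ζ + (b * y) • ζ) := by abel
        _ = A⁻¹ + ((a * x) • ζ + (b * y) • ζ) := by rw [hA1]
    rw [hlin] at h1
    simpa [hg, hB, smul_eq_mul] using h1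
  have hderivg : ∀ t ∈ I, deriv g t = g1 t := fun t ht => (hgderiv t ht).deriv
  have hanti : AntitoneOn g1 I := by
    have h1 := hgconc.antitoneOn_deriv (fun x hx => (hgderiv x hx).differentiableAt)
    intro x hx y hy hxy
    have := h1 hx hy hxy
    rwa [hderivg x hx, hderivg y hy] at this
  -- second derivative of g at 0
  set d'0 : ℝ := D2F (B 0) (-(B 0 * ζ * B 0)) (B 0 * ζ * B 0)
        + DF (B 0) (-(B 0 * ζ * B 0) * ζ * B 0 + B 0 * ζ * -(B 0 * ζ * B 0)) with hd'0
  have hφ2 : HasDerivAt (fun s => (F (B s)) ^ 2)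
      ((2 : ℕ) * (F (B 0)) ^ (2 - 1) * DF (B 0) (-(B 0 * ζ * B 0))) 0 := (hφ 0 h0I).pow 2
  have hg1deriv : HasDerivAt g1
      ((d'0 * (F (B 0)) ^ 2 - d 0 * ((2 : ℕ) * (F (B 0)) ^ (2 - 1)
          * DF (B 0) (-(B 0 * ζ * B 0)))) / ((F (B 0)) ^ 2) ^ 2) 0 :=
    (hdderiv 0 h0I).div hφ2 (pow_ne_zero 2 (ne_of_gt (hφpos 0 h0I)))
  -- the second derivative is nonpositive
  set G2 : ℝ := (d'0 * (F (B 0)) ^ 2 - d 0 * ((2 : ℕ) * (F (B 0)) ^ (2 - 1)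
      * DF (B 0) (-(B 0 * ζ * B 0)))) / ((F (B 0)) ^ 2) ^ 2 with hG2def
  have hG2 : G2 ≤ 0 := by
    have hslope := hasDerivAt_iff_tendsto_slope.mp hg1deriv
    refine le_of_tendsto hslope ?_
    have hImem : I ∈ nhdsWithin (0 : ℝ) {(0 : ℝ)}ᶜ := nhdsWithin_le_nhds (hIopen.mem_nhds h0I)
    filter_upwards [hImem, self_mem_nhdsWithin] with s hsI hs0
    have hs0' : s ≠ 0 := hs0
    rw [slope_def_field]
    rcases lt_or_gt_of_ne hs0' with h | h
    · have : g1 0 ≤ g1 s := hanti hsI h0I h.le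
      apply div_nonpos_of_nonneg_of_nonpos <;> simp <;> linarith
    · have : g1 s ≤ g1 0 := hanti h0I hsI h.le
      apply div_nonpos_of_nonpos_of_nonneg <;> simp <;> linarith
  -- algebraic identities at 0
  have hAζA : A * ζ * A = η := by
    rw [hζ, show A * (A⁻¹ * η * A⁻¹) * A = A * A⁻¹ * η * (A⁻¹ * A) by noncomm_ring,
      Matrix.mul_nonsing_inv _ hdetA, Matrix.nonsing_inv_mul _ hdetA, Matrix.one_mul,
      Matrix.mul_one]
  have hηζA : η * ζ * A = η * A⁻¹ * η := by
    rw [hζ, show η * (A⁻¹ * η * A⁻¹) * A = η * A⁻¹ * η * (A⁻¹ * A) by noncomm_ring,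
      Matrix.nonsing_inv_mul _ hdetA, Matrix.mul_one]
  have hAζη : A * ζ * η = η * A⁻¹ * η := by
    rw [hζ, show A * (A⁻¹ * η * A⁻¹) * η = A * A⁻¹ * (η * A⁻¹ * η) by noncomm_ring,
      Matrix.mul_nonsing_inv _ hdetA, Matrix.one_mul]
  have hsym2 : (η * A⁻¹ * η).IsSymm := by
    show (η * A⁻¹ * η)ᵀ = η * A⁻¹ * η
    rw [Matrix.transpose_mul, Matrix.transpose_mul, hAinvT, hηT, Matrix.mul_assoc]
  -- trace identities
  have htr1 : d 0 = (gradF A * η).trace := by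
    rw [hd]
    simp only [hB0, hAζA]
    exact hgrad A hA η hη
  have htr2 : DF A (η * A⁻¹ * η) = (gradF A * η * A⁻¹ * η).trace := by
    rw [hgrad A hA _ hsym2, Matrix.mul_assoc, Matrix.mul_assoc, Matrix.mul_assoc]
  have hd'0val : d'0 = -(D2F A η η) - 2 * (gradF A * η * A⁻¹ * η).trace := by
    rw [hd'0]
    simp only [hB0, hAζA]
    rw [show -η * ζ * A = -(η * ζ * A) by noncomm_ring, hηζA,
      show A * ζ * -η = -(A * ζ * η) by noncomm_ring, hAζη]
    rw [map_neg (D2F A), ContinuousLinearMap.neg_apply]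
    rw [show -(η * A⁻¹ * η) + -(η * A⁻¹ * η) = -((2:ℝ) • (η * A⁻¹ * η)) by
      rw [two_smul]; abel]
    rw [map_neg (DF A), _root_.map_smul (DF A), smul_eq_mul, htr2]
    ring
  have hφ'0 : DF (B 0) (-(B 0 * ζ * B 0)) = -(gradF A * η).trace := by
    simp only [hB0, hAζA]
    rw [map_neg (DF A), hgrad A hA η hη]
  -- final computation
  have hFA : 0 < F A := hpos A hA
  have hFB0 : F (B 0) = F A := by rw [hB0]
  set T1 : ℝ := (gradF A * η).trace with hT1
  set T2 : ℝ := (gradF A * η * A⁻¹ * η).trace with hT2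
  set D2 : ℝ := D2F A η η with hD2
  have hthis := hG2
  rw [hG2def, hFB0, hφ'0, hd'0val, htr1] at hthis
  have hden : (0:ℝ) < ((F A) ^ 2) ^ 2 := by positivity
  have hnum : (-(D2) - 2 * T2) * (F A) ^ 2 - T1 * (2 * F A ^ 1 * (-T1)) ≤ 0 := by
    rcases div_nonpos_iff.mp hthis with ⟨h6, h7⟩ | ⟨h6, h7⟩
    · nlinarith
    · push_cast at h6
      nlinarith [h6]
  rw [sub_nonneg, div_mul_eq_mul_div, div_le_iff₀ hFA]
  nlinarith [hnum, hFA, mul_pos hFA hFA]
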